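/- For all a, b > 0 with a ≠ b, one has (2/3)·D(a,b) + (1/3)·H(a,b) < C(a,b) < D(a,b). -/

import Mathlib

noncomputable def harmonicMean (a b : ℝ) : ℝ := 2 * a * b / (a + b)

noncomputable def contraC (a b : ℝ) : ℝ := (a ^ 2 + b ^ 2) / (a + b)

noncomputable def contraD (a b : ℝ) : ℝ := (a ^ 3 + b ^ 3) / (a ^ 2 + b ^ 2)

theorem stmt_9 (a b : ℝ) (ha : 0 < a) (hb : 0 < b) (hab : a ≠ b) :
    (2 / 3) * contraD a b + (1 / 3) * harmonicMean a b < contraC a b ∧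
    contraC a b < contraD a b := by
  have hs : 0 < a + b := by linarith
  have hq : 0 < a ^ 2 + b ^ 2 := by positivity
  have hd : (a - b) ^ 2 > 0 := by
    have : a - b ≠ 0 := sub_ne_zero.mpr hab
    positivity
  unfold harmonicMean contraC contraD
  constructor
  · rw [show (2:ℝ)/3 * ((a ^ 3 + b ^ 3) / (a ^ 2 + b ^ 2)) + 1/3 * (2 * a * b / (a + b)) = (2*(a^3+b^3)*(a+b) + 2*a*b*(a^2+b^2)) / (3*((a^2+b^2)*(a+b))) from by field_simp, div_lt_div_iff₀ (by positivity) hs]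
    nlinarith [mul_pos hd (mul_pos ha hb), mul_pos (mul_pos hd hd) hs, sq_nonneg (a+b), mul_pos hd hq, mul_pos (mul_pos hd ha) hb]
  · rw [div_lt_div_iff₀ hs hq]
    nlinarith [mul_pos hd (mul_pos ha hb)]
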